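/- arXiv:1711.10106 — 3 statements merged into one kernel-verified Lean document; each statement's English description precedes it below -/
import Mathlib

section
/- For b ∈ ℝ^N, one has b ∈ interior(C_A) if and only if dim Q_{A,b} = d and dim Q^k_{A,b} = d − 1 for every k ∈ {1,…,N}, where Q^k_{A,b} := Q_{A,b} ∩ {x ∈ ℝ^d : a_kᵀx = b_k}. -/
open scoped RealInnerProductSpace

noncomputable section

/-- `Q_{A,b} = {x ∈ ℝ^d : a_iᵀx ≤ b_i for all i}`. -/
def Qset {d N : ℕ} (a : Fin N → EuclideanSpace ℝ (Fin d)) (b : Fin N → ℝ) :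
    Set (EuclideanSpace ℝ (Fin d)) :=
  {x | ∀ i, ⟪a i, x⟫ ≤ b i}

/-- `C_A = {b : for every i there is x ∈ Q_{A,b} with a_iᵀx = b_i}`. -/
def CA {d N : ℕ} (a : Fin N → EuclideanSpace ℝ (Fin d)) : Set (Fin N → ℝ) :=
  {b | ∀ i, ∃ x ∈ Qset a b, ⟪a i, x⟫ = b i}

/-- The facet `Q^k_{A,b} = Q_{A,b} ∩ {x : a_kᵀx = b_k}`. -/
def Qfacet {d N : ℕ} (a : Fin N → EuclideanSpace ℝ (Fin d)) (b : Fin N → ℝ) (k : Fin N) :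
    Set (EuclideanSpace ℝ (Fin d)) :=
  Qset a b ∩ {x | ⟪a k, x⟫ = b k}

/-- The dimension of a convex subset of `ℝ^d`: the dimension of (the direction of)
its affine hull. -/
def convDim {d : ℕ} (S : Set (EuclideanSpace ℝ (Fin d))) : ℕ :=
  Module.finrank ℝ (affineSpan ℝ S).direction

section aux
variable {d N : ℕ}

lemma vectorSpan_le_orth {s : Set (EuclideanSpace ℝ (Fin d))} {u : EuclideanSpace ℝ (Fin d)}
    {c : ℝ} (h : ∀ x ∈ s, ⟪u, x⟫ = c) : vectorSpan ℝ s ≤ (Submodule.span ℝ {u})ᗮ := by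
  rw [vectorSpan_def]
  refine Submodule.span_le.2 ?_
  rintro v hv
  rw [Set.mem_vsub] at hv
  obtain ⟨x, hx, y, hy, rfl⟩ := hv
  rw [SetLike.mem_coe, Submodule.mem_orthogonal_singleton_iff_inner_right]
  rw [vsub_eq_sub, inner_sub_right, h x hx, h y hy, sub_self]

lemma finrank_orth_singleton {u : EuclideanSpace ℝ (Fin d)} (hu : ‖u‖ = 1) :
    Module.finrank ℝ ((Submodule.span ℝ {u})ᗮ : Submodule ℝ (EuclideanSpace ℝ (Fin d))) = d - 1 := by
  have hu0 : u ≠ 0 := by intro h; rw [h, norm_zero] at hu; norm_num at hu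
  have h1 : Module.finrank ℝ (Submodule.span ℝ {u}) = 1 := finrank_span_singleton hu0
  have h2 := Submodule.finrank_add_finrank_orthogonal (𝕜 := ℝ) (K := Submodule.span ℝ {u})
  rw [h1, finrank_euclideanSpace_fin] at h2
  omega

lemma le_of_small_mem {W V : Submodule ℝ (EuclideanSpace ℝ (Fin d))} {ε : ℝ} (hε : 0 < ε)
    (h : ∀ w ∈ W, ‖w‖ ≤ ε → w ∈ V) : W ≤ V := by
  intro w hw
  rcases eq_or_ne w 0 with rfl | hw0
  · exact V.zero_mem
  · have hn : 0 < ‖w‖ := norm_pos_iff.2 hw0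
    have h1 : (ε / ‖w‖) • w ∈ V := by
      apply h _ (W.smul_mem _ hw)
      rw [norm_smul, Real.norm_eq_abs, abs_of_pos (by positivity), div_mul_cancel₀ _ hn.ne']
    have h2 := V.smul_mem (‖w‖ / ε) h1
    have hc : (‖w‖ / ε) • ((ε / ‖w‖) • w) = w := by
      rw [smul_smul]
      have : ‖w‖ / ε * (ε / ‖w‖) = 1 := by field_simp
      rw [this, one_smul]
    rwa [hc] at h2

lemma forward_full {a : Fin N → EuclideanSpace ℝ (Fin d)} {b : Fin N → ℝ}
    (ha_norm : ∀ i, ‖a i‖ = 1) {x : EuclideanSpace ℝ (Fin d)} {ε : ℝ}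
    (hε : 0 < ε) (hx : ∀ i, ⟪a i, x⟫ ≤ b i - ε) :
    vectorSpan ℝ (Qset a b) = ⊤ := by
  have hball : ∀ v : EuclideanSpace ℝ (Fin d), ‖v‖ ≤ ε → x + v ∈ Qset a b := by
    intro v hv i
    have h2 : ⟪a i, v⟫ ≤ ε := by
      calc ⟪a i, v⟫ ≤ ‖a i‖ * ‖v‖ := real_inner_le_norm _ _
      _ ≤ ε := by rw [ha_norm]; simpa using hv
    rw [inner_add_right]
    linarith [hx i]
  refine eq_top_iff.2 (le_of_small_mem hε ?_)
  intro w _ hw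
  have hx0 : x ∈ Qset a b := by
    have := hball 0 (by simpa using hε.le)
    simpa using this
  have := vsub_mem_vectorSpan ℝ (hball w hw) hx0
  simpa using this

lemma forward_facet {a : Fin N → EuclideanSpace ℝ (Fin d)} {b : Fin N → ℝ}
    (ha_norm : ∀ i, ‖a i‖ = 1) (k : Fin N) {x : EuclideanSpace ℝ (Fin d)} {ε : ℝ}
    (hε : 0 < ε) (hxk : ⟪a k, x⟫ = b k) (hx : ∀ i, i ≠ k → ⟪a i, x⟫ ≤ b i - ε) :
    vectorSpan ℝ (Qfacet a b k) = (Submodule.span ℝ {a k})ᗮ := by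
  have hball : ∀ v : EuclideanSpace ℝ (Fin d), v ∈ (Submodule.span ℝ {a k})ᗮ → ‖v‖ ≤ ε →
      x + v ∈ Qfacet a b k := by
    intro v hv hvn
    have hvk : ⟪a k, v⟫ = 0 := Submodule.mem_orthogonal_singleton_iff_inner_right.1 hv
    constructor
    · intro i
      rw [inner_add_right]
      by_cases hik : i = k
      · subst hik; rw [hxk, hvk]; simp
      · have h2 : ⟪a i, v⟫ ≤ ε := by
          calc ⟪a i, v⟫ ≤ ‖a i‖ * ‖v‖ := real_inner_le_norm _ _
          _ ≤ ε := by rw [ha_norm]; simpa using hvn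
        linarith [hx i hik]
    · show ⟪a k, x + v⟫ = b k
      rw [inner_add_right, hxk, hvk, add_zero]
  refine le_antisymm ?_ (le_of_small_mem hε ?_)
  · rw [vectorSpan_def]
    refine Submodule.span_le.2 ?_
    rintro u hu
    rw [Set.mem_vsub] at hu
    obtain ⟨p, hp, q, hq, rfl⟩ := hu
    rw [SetLike.mem_coe, Submodule.mem_orthogonal_singleton_iff_inner_right]
    rw [vsub_eq_sub, inner_sub_right, hp.2, hq.2, sub_self]
  · intro w hwW hw
    have hx0 : x ∈ Qfacet a b k := by
      have := hball 0 (Submodule.zero_mem _) (by simpa using hε.le)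
      simpa using this
    have := vsub_mem_vectorSpan ℝ (hball w hwW hw) hx0
    simpa using this

lemma exists_strict_facet {a : Fin N → EuclideanSpace ℝ (Fin d)} {b : Fin N → ℝ}
    (hd : 1 ≤ d) (hN : 1 ≤ N)
    (ha_inj : Function.Injective a) (ha_norm : ∀ i, ‖a i‖ = 1)
    (hQ : Module.finrank ℝ (vectorSpan ℝ (Qset a b)) = d) (k : Fin N)
    (hne : (Qfacet a b k).Nonempty)
    (hfr : Module.finrank ℝ (vectorSpan ℝ (Qfacet a b k)) = d - 1) :
    ∃ x ∈ Qfacet a b k, ∀ i, i ≠ k → ⟪a i, x⟫ < b i := by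
  have step1 : ∀ i, i ≠ k → ∃ x ∈ Qfacet a b k, ⟪a i, x⟫ < b i := by
    intro i hik
    by_contra hcon
    push_neg at hcon
    have hall : ∀ x ∈ Qfacet a b k, ⟪a i, x⟫ = b i :=
      fun x hx => le_antisymm (hx.1 i) (hcon x hx)
    have hle_k : vectorSpan ℝ (Qfacet a b k) ≤ (Submodule.span ℝ {a k})ᗮ :=
      vectorSpan_le_orth (fun x hx => hx.2)
    have heq : vectorSpan ℝ (Qfacet a b k) = (Submodule.span ℝ {a k})ᗮ :=
      Submodule.eq_of_le_of_finrank_eq hle_k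
        (by rw [hfr, finrank_orth_singleton (ha_norm k)])
    have hle_i : (Submodule.span ℝ {a k})ᗮ ≤ (Submodule.span ℝ {a i})ᗮ := by
      rw [← heq]; exact vectorSpan_le_orth hall
    have hspan : Submodule.span ℝ {a i} ≤ Submodule.span ℝ {a k} := by
      have := Submodule.orthogonal_le hle_i
      rwa [Submodule.orthogonal_orthogonal, Submodule.orthogonal_orthogonal] at this
    obtain ⟨c, hc⟩ := Submodule.mem_span_singleton.1
      (hspan (Submodule.mem_span_singleton_self (a i)))
    have habs : |c| = 1 := by
      have h1 := ha_norm i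
      rw [← hc, norm_smul, ha_norm k, Real.norm_eq_abs, mul_one] at h1
      exact h1
    rcases (abs_eq (by norm_num : (0:ℝ) ≤ 1)).1 habs with h1 | h1
    · exact hik (ha_inj (by rw [← hc, h1, one_smul]))
    · obtain ⟨x0, hx0⟩ := hne
      have hbi : b i = - b k := by
        have h2 := hall x0 hx0
        rw [← hc, h1, real_inner_smul_left, hx0.2] at h2
        linarith
      have hQsub : ∀ x ∈ Qset a b, ⟪a k, x⟫ = b k := by
        intro x hx
        have h1' := hx i
        have h2' := hx k
        rw [← hc, h1, real_inner_smul_left, hbi] at h1'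
        linarith
      have hle := Submodule.finrank_mono (vectorSpan_le_orth hQsub)
      rw [hQ, finrank_orth_singleton (ha_norm k)] at hle
      omega
  classical
  obtain ⟨x0, hx0⟩ := hne
  choose! X hX1 hX2 using step1
  set Y : Fin N → EuclideanSpace ℝ (Fin d) := fun i => if h : i = k then x0 else X i
  have hY1 : ∀ i, Y i ∈ Qfacet a b k := by
    intro i
    by_cases h : i = k
    · simp [Y, h, hx0]
    · simp only [Y, dif_neg h]; exact hX1 i h
  have hY2 : ∀ i, i ≠ k → ⟪a i, Y i⟫ < b i := by
    intro i h
    simp only [Y, dif_neg h]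
    exact hX2 i h
  have hNpos : (0:ℝ) < N := by exact_mod_cast hN
  refine ⟨∑ i : Fin N, ((N:ℝ)⁻¹) • Y i, ?_, ?_⟩
  · have hconv : Convex ℝ (Qfacet a b k) := by
      refine (Convex.inter ?_ ?_)
      · intro x hx y hy s t hs ht hst
        intro j
        have h1 := hx j
        have h2 := hy j
        simp only [inner_add_right, real_inner_smul_right]
        have h3 : s * ⟪a j, x⟫ ≤ s * b j := mul_le_mul_of_nonneg_left h1 hs
        have h4 : t * ⟪a j, y⟫ ≤ t * b j := mul_le_mul_of_nonneg_left h2 ht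
        have h5 : s * b j + t * b j = b j := by linear_combination (b j) * hst
        linarith
      · intro x hx y hy s t hs ht hst
        simp only [Set.mem_setOf_eq] at hx hy ⊢
        simp only [inner_add_right, real_inner_smul_right, hx, hy]
        linear_combination (b k) * hst
    refine hconv.sum_mem (fun i _ => by positivity) ?_ (fun i _ => hY1 i)
    simp [Finset.sum_const, hNpos.ne']
  · intro j hj
    have hsum : ⟪a j, ∑ i : Fin N, ((N:ℝ)⁻¹) • Y i⟫
        = ∑ i : Fin N, (N:ℝ)⁻¹ * ⟪a j, Y i⟫ := by
      rw [inner_sum]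
      exact Finset.sum_congr rfl (fun i _ => real_inner_smul_right _ _ _)
    rw [hsum]
    have hlt : ∑ i : Fin N, (N:ℝ)⁻¹ * ⟪a j, Y i⟫ < ∑ i : Fin N, (N:ℝ)⁻¹ * b j := by
      refine Finset.sum_lt_sum (fun i _ => ?_) ⟨j, Finset.mem_univ j, ?_⟩
      · exact mul_le_mul_of_nonneg_left ((hY1 i).1 j) (by positivity)
      · exact mul_lt_mul_of_pos_left (hY2 j hj) (by positivity)
    have heq : ∑ i : Fin N, (N:ℝ)⁻¹ * b j = b j := by
      rw [Finset.sum_const, Finset.card_univ, Fintype.card_fin, nsmul_eq_mul]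
      field_simp
    linarith

end aux

theorem stmt_16 (d N : ℕ) (hd : 1 ≤ d) (hN : 1 ≤ N)
    (a : Fin N → EuclideanSpace ℝ (Fin d))
    (ha_inj : Function.Injective a) (ha_norm : ∀ i, ‖a i‖ = 1)
    (b : Fin N → ℝ) :
    b ∈ interior (CA a) ↔
      ((Qset a b).Nonempty ∧ convDim (Qset a b) = d) ∧
      (∀ k : Fin N, (Qfacet a b k).Nonempty ∧ convDim (Qfacet a b k) = d - 1) := by
  constructor
  · intro hb
    rw [mem_interior_iff_mem_nhds, Metric.mem_nhds_iff] at hb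
    obtain ⟨ε, hε, hball⟩ := hb
    have hb1 : (fun i => b i - ε/2) ∈ CA a := by
      apply hball
      rw [Metric.mem_ball]
      have hle : dist (fun i => b i - ε/2) b ≤ ε/2 := by
        rw [dist_pi_le_iff (by positivity)]
        intro i
        have h : (b i - ε/2) - b i = -(ε/2) := by ring
        rw [Real.dist_eq, h, abs_neg, abs_of_nonneg (by positivity)]
      linarith
    obtain ⟨x, hx, -⟩ := hb1 ⟨0, hN⟩
    have hx' : ∀ i, ⟪a i, x⟫ ≤ b i - ε/2 := hx
    have hQfull : vectorSpan ℝ (Qset a b) = ⊤ := forward_full ha_norm (by positivity) hx'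
    have hQne : (Qset a b).Nonempty := ⟨x, fun i => by linarith [hx' i]⟩
    have hdimQ : convDim (Qset a b) = d := by
      unfold convDim
      rw [direction_affineSpan, hQfull, finrank_top, finrank_euclideanSpace_fin]
    refine ⟨⟨hQne, hdimQ⟩, fun k => ?_⟩
    have hb2 : (fun i => if i = k then b k else b i - ε/2) ∈ CA a := by
      apply hball
      rw [Metric.mem_ball]
      have hle : dist (fun i => if i = k then b k else b i - ε/2) b ≤ ε/2 := by
        rw [dist_pi_le_iff (by positivity)]
        intro i
        by_cases h : i = k
        · subst h
          simp [Real.dist_eq, le_of_lt, hε]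
        · have h2 : (b i - ε/2) - b i = -(ε/2) := by ring
          rw [if_neg h, Real.dist_eq, h2, abs_neg, abs_of_nonneg (by positivity)]
      linarith
    obtain ⟨y, hy, hyk0⟩ := hb2 k
    have hyk : ⟪a k, y⟫ = b k := by simpa using hyk0
    have hy' : ∀ i, i ≠ k → ⟪a i, y⟫ ≤ b i - ε/2 := by
      intro i h
      simpa [h] using hy i
    have hyF : y ∈ Qfacet a b k := by
      refine ⟨fun i => ?_, hyk⟩
      by_cases h : i = k
      · rw [h]; exact le_of_eq hyk
      · linarith [hy' i h]
    have hspan := forward_facet ha_norm k (by positivity : (0:ℝ) < ε/2) hyk hy'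
    refine ⟨⟨y, hyF⟩, ?_⟩
    unfold convDim
    rw [direction_affineSpan, hspan, finrank_orth_singleton (ha_norm k)]
  · rintro ⟨⟨hQne, hQdim⟩, hF⟩
    have hQ : Module.finrank ℝ (vectorSpan ℝ (Qset a b)) = d := by
      rw [← direction_affineSpan]; exact hQdim
    have hstrict : ∀ k : Fin N, ∃ x ∈ Qfacet a b k, ∀ i, i ≠ k → ⟪a i, x⟫ < b i := by
      intro k
      refine exists_strict_facet hd hN ha_inj ha_norm hQ k (hF k).1 ?_
      rw [← direction_affineSpan]; exact (hF k).2
    classical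
    choose x hx1 hx2 using hstrict
    have hNe : Nonempty (Fin N) := ⟨⟨0, hN⟩⟩
    have hU : (Finset.univ : Finset (Fin N × Fin N)).Nonempty := Finset.univ_nonempty
    set f : Fin N × Fin N → ℝ :=
      fun p => if p.2 = p.1 then 1 else b p.2 - ⟪a p.2, x p.1⟫ with hf
    set δ := Finset.inf' Finset.univ hU f with hδ
    have hδpos : 0 < δ := by
      rw [hδ, Finset.lt_inf'_iff]
      rintro ⟨p1, p2⟩ -
      by_cases h : p2 = p1
      · simp only [hf, if_pos h]; norm_num
      · simp only [hf, if_neg h]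
        have := hx2 p1 p2 h
        linarith
    have hδle : ∀ k i, i ≠ k → δ ≤ b i - ⟪a i, x k⟫ := by
      intro k i h
      have h2 : f (k, i) = b i - ⟪a i, x k⟫ := if_neg h
      have h3 := Finset.inf'_le (b := (k, i)) f (Finset.mem_univ _)
      rw [h2] at h3
      exact h3
    rw [mem_interior_iff_mem_nhds]
    refine Filter.mem_of_superset (Metric.ball_mem_nhds b (by positivity : (0:ℝ) < δ/3)) ?_
    intro b' hb'
    rw [Metric.mem_ball] at hb'
    have hco : ∀ i, |b' i - b i| < δ/3 := by
      intro i
      calc |b' i - b i| = dist (b' i) (b i) := (Real.dist_eq _ _).symm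
      _ ≤ dist b' b := dist_le_pi_dist b' b i
      _ < δ/3 := hb'
    intro k
    have hkk : ⟪a k, a k⟫ = 1 := by
      rw [real_inner_self_eq_norm_mul_norm, ha_norm, one_mul]
    refine ⟨x k + (b' k - b k) • a k, ?_, ?_⟩
    · intro i
      rw [inner_add_right, real_inner_smul_right]
      by_cases h : i = k
      · rw [h, hkk, (hx1 k).2]
        linarith
      · have h1 := hδle k i h
        have h2 : |⟪a i, a k⟫| ≤ 1 := by
          have := abs_real_inner_le_norm (a i) (a k)
          rwa [ha_norm, ha_norm, one_mul] at this
        have h3 := hco k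
        have h4 := hco i
        have h5 : (b' k - b k) * ⟪a i, a k⟫ ≤ |b' k - b k| := by
          calc (b' k - b k) * ⟪a i, a k⟫ ≤ |(b' k - b k) * ⟪a i, a k⟫| := le_abs_self _
          _ = |b' k - b k| * |⟪a i, a k⟫| := abs_mul _ _
          _ ≤ |b' k - b k| * 1 := mul_le_mul_of_nonneg_left h2 (abs_nonneg _)
          _ = |b' k - b k| := mul_one _
        have h6 : b i - b' i ≤ |b' i - b i| := by
          rw [abs_sub_comm]; exact le_abs_self _
        linarith
    · rw [inner_add_right, real_inner_smul_right, (hx1 k).2, hkk]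
      ring
end
end

section
/- Assume Q_{A,0} = {0} (so that every Q_{A,b} is bounded), and assume δ_A ∈ (0,1), where δ_A := sup_{c ∈ S^{d−1}} min_{1 ≤ k ≤ N} ‖c − a_k‖₂. For a nonempty convex compact set C ⊆ ℝ^d, let P(C) := Q_{A,b(C)} with b(C)_i := σ_C(a_i). Then for every nonempty convex compact C ⊆ ℝ^d one has C ⊆ P(C) and dist_H(P(C), C) ≤ ((2 − δ_A)/(1 − δ_A)) · δ_A · ‖C‖₂. -/
open scoped RealInnerProductSpace

noncomputable section

/-- The support function `σ_C(v) = sup_{x ∈ C} vᵀx`. -/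
def suppFn {d : ℕ} (C : Set (EuclideanSpace ℝ (Fin d))) (v : EuclideanSpace ℝ (Fin d)) : ℝ :=
  sSup ((fun x => ⟪v, x⟫) '' C)

/-- The size `‖C‖₂ = sup_{x ∈ C} ‖x‖₂`. -/
def setNorm {d : ℕ} (C : Set (EuclideanSpace ℝ (Fin d))) : ℝ :=
  sSup ((fun x => ‖x‖) '' C)

/-- The metric density `δ_A = sup_{c ∈ S^{d-1}} min_k ‖c - a_k‖₂`. -/
def deltaA {d N : ℕ} (a : Fin N → EuclideanSpace ℝ (Fin d)) : ℝ :=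
  sSup {r | ∃ c : EuclideanSpace ℝ (Fin d), ‖c‖ = 1 ∧ r = sInf {s | ∃ k, s = ‖c - a k‖}}

/-- The projection `P_{G_A}(C) = Q_{A,b(C)}` with `b(C)_i = σ_C(a_i)`. -/
def PGA {d N : ℕ} (a : Fin N → EuclideanSpace ℝ (Fin d)) (C : Set (EuclideanSpace ℝ (Fin d))) :
    Set (EuclideanSpace ℝ (Fin d)) :=
  Qset a (fun i => suppFn C (a i))

theorem stmt_17 (d N : ℕ) (hd : 1 ≤ d) (hN : 1 ≤ N)
    (a : Fin N → EuclideanSpace ℝ (Fin d))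
    (ha_inj : Function.Injective a) (ha_norm : ∀ i, ‖a i‖ = 1)
    (hQ0 : Qset a 0 = {0})
    (hδ0 : 0 < deltaA a) (hδ1 : deltaA a < 1)
    (C : Set (EuclideanSpace ℝ (Fin d)))
    (hCne : C.Nonempty) (hCconv : Convex ℝ C) (hCcomp : IsCompact C) :
    C ⊆ PGA a C ∧
      Metric.hausdorffDist (PGA a C) C ≤
        (2 - deltaA a) / (1 - deltaA a) * deltaA a * setNorm C := by
  set δ := deltaA a with hδdef
  set M := setNorm C with hMdef
  have h1δ : 0 < 1 - δ := by linarith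
  -- bddAbove of inner images
  have hbdd : ∀ v : EuclideanSpace ℝ (Fin d), BddAbove ((fun x => ⟪v, x⟫) '' C) := by
    intro v
    exact (hCcomp.image (Continuous.inner continuous_const continuous_id)).bddAbove
  have hmem_le : ∀ v : EuclideanSpace ℝ (Fin d), ∀ x ∈ C, ⟪v, x⟫ ≤ suppFn C v := by
    intro v x hx
    exact le_csSup (hbdd v) ⟨x, hx, rfl⟩
  have hsub : C ⊆ PGA a C := fun x hx i => hmem_le (a i) x hx
  -- norms
  have hnorm_le : ∀ x ∈ C, ‖x‖ ≤ M := by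
    intro x hx
    exact le_csSup (hCcomp.image continuous_norm).bddAbove ⟨x, hx, rfl⟩
  have hM0 : 0 ≤ M := by
    obtain ⟨x, hx⟩ := hCne
    exact le_trans (norm_nonneg x) (hnorm_le x hx)
  -- suppFn bound
  have hsupp_le : ∀ k : Fin N, suppFn C (a k) ≤ M := by
    intro k
    apply csSup_le (hCne.image _)
    rintro s ⟨x, hx, rfl⟩
    calc ⟪a k, x⟫ ≤ ‖a k‖ * ‖x‖ := real_inner_le_norm _ _
    _ ≤ M := by rw [ha_norm k, one_mul]; exact hnorm_le x hx
  -- nearest direction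
  have hnear : ∀ c : EuclideanSpace ℝ (Fin d), ‖c‖ = 1 → ∃ k, ‖c - a k‖ ≤ δ := by
    intro c hc
    have hNne : Nonempty (Fin N) := ⟨⟨0, hN⟩⟩
    obtain ⟨k, _, hk⟩ := Finset.exists_min_image Finset.univ (fun k => ‖c - a k‖)
      ⟨Classical.arbitrary (Fin N), Finset.mem_univ _⟩
    refine ⟨k, ?_⟩
    have h1 : ‖c - a k‖ ≤ sInf {s | ∃ j, s = ‖c - a j‖} := by
      have hne : {s | ∃ j, s = ‖c - a j‖}.Nonempty := ⟨‖c - a k‖, ⟨k, rfl⟩⟩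
      apply le_csInf hne
      rintro s ⟨j, rfl⟩
      exact hk j (Finset.mem_univ j)
    have h2 : sInf {s | ∃ j, s = ‖c - a j‖} ≤ δ := by
      have hmem : sInf {s | ∃ j, s = ‖c - a j‖} ∈
          {r | ∃ c' : EuclideanSpace ℝ (Fin d), ‖c'‖ = 1 ∧
            r = sInf {s | ∃ k, s = ‖c' - a k‖}} := ⟨c, hc, rfl⟩
      apply le_csSup ?_ hmem
      refine ⟨2, ?_⟩
      rintro r ⟨c', hc', rfl⟩
      have : sInf {s | ∃ j, s = ‖c' - a j‖} ≤ ‖c' - a k‖ := by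
        have hbb : BddBelow {s | ∃ j, s = ‖c' - a j‖} := by
          refine ⟨0, ?_⟩
          rintro s ⟨j, rfl⟩
          exact norm_nonneg _
        have hmem' : ‖c' - a k‖ ∈ {s | ∃ j, s = ‖c' - a j‖} := ⟨k, rfl⟩
        exact csInf_le hbb hmem'
      calc sInf {s | ∃ j, s = ‖c' - a j‖} ≤ ‖c' - a k‖ := this
        _ ≤ ‖c'‖ + ‖a k‖ := norm_sub_le _ _
        _ = 2 := by rw [hc', ha_norm k]; norm_num
    linarith
  -- inner difference bound
  have hinner : ∀ (c v x : EuclideanSpace ℝ (Fin d)), ⟪c, x⟫ ≤ ⟪v, x⟫ + ‖c - v‖ * ‖x‖ := by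
    intro c v x
    have : ⟪c - v, x⟫ ≤ ‖c - v‖ * ‖x‖ := real_inner_le_norm _ _
    rw [inner_sub_left] at this
    linarith
  -- norm bound on PGA
  have hPnorm : ∀ x ∈ PGA a C, ‖x‖ ≤ M / (1 - δ) := by
    intro x hx
    rcases eq_or_ne x 0 with rfl | hx0
    · simp [div_nonneg hM0 h1δ.le]
    · set c := ‖x‖⁻¹ • x with hcdef
      have hxn : (0:ℝ) < ‖x‖ := norm_pos_iff.mpr hx0
      have hc : ‖c‖ = 1 := by
        rw [hcdef, norm_smul, norm_inv, norm_norm, inv_mul_cancel₀ hxn.ne']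
      obtain ⟨k, hk⟩ := hnear c hc
      have h1 : ⟪c, x⟫ = ‖x‖ := by
        rw [hcdef, real_inner_smul_left, real_inner_self_eq_norm_mul_norm]
        field_simp
      have h2 : ⟪c, x⟫ ≤ ⟪a k, x⟫ + ‖c - a k‖ * ‖x‖ := hinner c (a k) x
      have h3 : ⟪a k, x⟫ ≤ suppFn C (a k) := hx k
      have h4 : ‖c - a k‖ * ‖x‖ ≤ δ * ‖x‖ := mul_le_mul_of_nonneg_right hk hxn.le
      have : ‖x‖ ≤ M + δ * ‖x‖ := by
        have := hsupp_le k
        linarith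
      rw [le_div_iff₀ h1δ]
      linarith
  -- distance bound for points of PGA
  set r := (2 - δ) / (1 - δ) * δ * M with hrdef
  have hr0 : 0 ≤ r := by
    apply mul_nonneg (mul_nonneg (div_nonneg (by linarith) h1δ.le) hδ0.le) hM0
  have hkey : ∀ x ∈ PGA a C, ∃ y ∈ C, dist x y ≤ r := by
    intro x hx
    obtain ⟨y, hy, hy_min⟩ := exists_norm_eq_iInf_of_complete_convex hCne
      hCcomp.isComplete hCconv x
    have hproj : ∀ z ∈ C, ⟪x - y, z - y⟫ ≤ 0 :=
      (norm_eq_iInf_iff_real_inner_le_zero hCconv hy).mp hy_min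
    refine ⟨y, hy, ?_⟩
    rw [dist_eq_norm]
    rcases eq_or_ne x y with rfl | hxy
    · simpa using hr0
    · set c := ‖x - y‖⁻¹ • (x - y) with hcdef
      have hxyn : (0:ℝ) < ‖x - y‖ := norm_pos_iff.mpr (sub_ne_zero.mpr hxy)
      have hc : ‖c‖ = 1 := by
        rw [hcdef, norm_smul, norm_inv, norm_norm, inv_mul_cancel₀ hxyn.ne']
      obtain ⟨k, hk⟩ := hnear c hc
      -- σ_C(a k) ≤ ⟪c, y⟫ + δ * M
      have hsupp : suppFn C (a k) ≤ ⟪c, y⟫ + δ * M := by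
        apply csSup_le (hCne.image _)
        rintro s ⟨z, hz, rfl⟩
        have h1 : ⟪a k, z⟫ ≤ ⟪c, z⟫ + ‖a k - c‖ * ‖z‖ := hinner (a k) c z
        have h2 : ⟪c, z⟫ ≤ ⟪c, y⟫ := by
          have := hproj z hz
          have h3 : ⟪x - y, z - y⟫ = ‖x - y‖ * (⟪c, z⟫ - ⟪c, y⟫) := by
            rw [hcdef, real_inner_smul_left, real_inner_smul_left, inner_sub_right]
            field_simp
          rw [h3] at this
          nlinarith
        have h4 : ‖a k - c‖ * ‖z‖ ≤ δ * M := by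
          rw [norm_sub_rev]
          exact mul_le_mul hk (hnorm_le z hz) (norm_nonneg z) hδ0.le
        linarith
      have h1 : ⟪c, x⟫ = ‖x - y‖ + ⟪c, y⟫ := by
        have : ⟪c, x - y⟫ = ‖x - y‖ := by
          rw [hcdef, real_inner_smul_left, real_inner_self_eq_norm_mul_norm]
          field_simp
        rw [inner_sub_right] at this
        linarith
      have h2 : ⟪c, x⟫ ≤ ⟪a k, x⟫ + ‖c - a k‖ * ‖x‖ := hinner c (a k) x
      have h3 : ⟪a k, x⟫ ≤ suppFn C (a k) := hx k
      have h4 : ‖c - a k‖ * ‖x‖ ≤ δ * (M / (1 - δ)) := by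
        apply mul_le_mul hk (hPnorm x hx) (norm_nonneg x) hδ0.le
      have h5 : ‖x - y‖ ≤ δ * M + δ * (M / (1 - δ)) := by linarith
      have h6 : δ * M + δ * (M / (1 - δ)) = r := by
        rw [hrdef]; field_simp; ring
      linarith
  refine ⟨hsub, ?_⟩
  apply Metric.hausdorffDist_le_of_mem_dist hr0 hkey
  intro y hy
  exact ⟨y, hsub hy, by simpa using hr0⟩
end
end

section
/- Assume Q_{A,0} = {0} (so that every Q_{A,b} is bounded). Define κ_A := sup_{c ∈ S^{d−1}} inf{ Σ_{k ∈ I*_p} p_k · ‖a_k − c/‖p‖₁‖₂ : p ∈ Q*_{A,c} }, where ‖p‖₁ := Σ_k p_k. For a nonempty convex compact set C ⊆ ℝ^d, let P(C) := Q_{A,b(C)} with b(C)_i := σ_C(a_i). Then for every nonempty convex compact C ⊆ ℝ^d one has C ⊆ P(C) and dist(P(C), C) ≤ κ_A · ‖C‖₂, where dist(S,T) := sup_{s ∈ S} inf_{t ∈ T} ‖s − t‖₂. -/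
open scoped RealInnerProductSpace

noncomputable section

/-- `Q*_{A,c} = {p ∈ ℝ^N : p ≥ 0, Aᵀp = c}`. -/
def Qstar {d N : ℕ} (a : Fin N → EuclideanSpace ℝ (Fin d)) (c : EuclideanSpace ℝ (Fin d)) :
    Set (Fin N → ℝ) :=
  {p | (∀ i, 0 ≤ p i) ∧ ∑ i, p i • a i = c}

/-- `κ_A = sup_{c ∈ S^{d-1}} inf { Σ_k p_k ‖a_k - c/‖p‖₁‖₂ : p ∈ Q*_{A,c} }`.
(The terms with `p_k = 0` vanish, so the sum over `I*_p` equals the sum over all `k`.) -/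
def kappaA {d N : ℕ} (a : Fin N → EuclideanSpace ℝ (Fin d)) : ℝ :=
  sSup {r | ∃ c : EuclideanSpace ℝ (Fin d), ‖c‖ = 1 ∧
    r = sInf {s | ∃ p ∈ Qstar a c, s = ∑ k, p k * ‖a k - (∑ j, p j)⁻¹ • c‖}}

/-- The Hausdorff semi-distance `dist(S,T) = sup_{s ∈ S} inf_{t ∈ T} ‖s - t‖₂`. -/
def semiDist {d : ℕ} (S T : Set (EuclideanSpace ℝ (Fin d))) : ℝ :=
  sSup ((fun x => Metric.infDist x T) '' S)

section Aux
variable {d N : ℕ}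

local notation "E" => EuclideanSpace ℝ (Fin d)

lemma bddAbove_inner_image {C : Set E} (hC : IsCompact C) (v : E) :
    BddAbove ((fun x => ⟪v, x⟫) '' C) :=
  (hC.image (continuous_const.inner continuous_id)).bddAbove

lemma le_suppFn {C : Set E} (hC : IsCompact C) {x : E} (hx : x ∈ C) (v : E) :
    ⟪v, x⟫ ≤ suppFn C v :=
  le_csSup (bddAbove_inner_image hC v) ⟨x, hx, rfl⟩

lemma suppFn_le {C : Set E} (hCne : C.Nonempty) {v : E} {M : ℝ}
    (h : ∀ x ∈ C, ⟪v, x⟫ ≤ M) : suppFn C v ≤ M :=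
  csSup_le (hCne.image _) (by rintro _ ⟨x, hx, rfl⟩; exact h x hx)

lemma le_setNorm {C : Set E} (hC : IsCompact C) {x : E} (hx : x ∈ C) :
    ‖x‖ ≤ setNorm C :=
  le_csSup ((hC.image continuous_norm).bddAbove) ⟨x, hx, rfl⟩

lemma exists_rep (hd : 1 ≤ d) (hN : 1 ≤ N) (a : Fin N → E)
    (ha_inj : Function.Injective a)
    (hQ0 : Qset a 0 = {0}) :
    ∃ ε : ℝ, 0 < ε ∧ ∀ c : E, ‖c‖ = 1 → ∃ p ∈ Qstar a c, ∑ j, p j = ε⁻¹ := by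
  haveI : Nonempty (Fin N) := ⟨⟨0, hN⟩⟩
  classical
  have hNe : (Finset.univ : Finset (Fin N)).Nonempty := Finset.univ_nonempty
  set f : E → ℝ := fun x => Finset.univ.sup' hNe (fun i => ⟪a i, x⟫) with hf
  have hf_cont : Continuous f := by
    rw [continuous_iff_continuousAt]
    intro x
    exact ContinuousAt.finset_sup'_apply hNe
      (fun i _ => ((continuous_const.inner continuous_id)).continuousAt)
  have hsne : (Metric.sphere (0:E) 1).Nonempty := by
    refine ⟨EuclideanSpace.single ⟨0, hd⟩ (1:ℝ), ?_⟩
    simp [EuclideanSpace.norm_single]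
  obtain ⟨x₀, hx₀s, hx₀min⟩ :=
    (isCompact_sphere (0:E) 1).exists_isMinOn hsne hf_cont.continuousOn
  set ε : ℝ := f x₀ with hε
  have hεpos : 0 < ε := by
    by_contra h
    push_neg at h
    have hx0 : x₀ ∈ Qset a 0 := by
      intro i
      exact le_trans (Finset.le_sup' (fun i => ⟪a i, x₀⟫) (Finset.mem_univ i)) h
    rw [hQ0, Set.mem_singleton_iff] at hx0
    have : ‖x₀‖ = 1 := mem_sphere_zero_iff_norm.mp hx₀s
    rw [hx0] at this
    simp at this
  refine ⟨ε, hεpos, fun c hc => ?_⟩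
  have hmem : ε • c ∈ convexHull ℝ (Set.range a) := by
    by_contra hout
    obtain ⟨F, u, hFu, huF⟩ := geometric_hahn_banach_closed_point
      (convex_convexHull ℝ _) ((Set.finite_range a).isCompact_convexHull ℝ).isClosed hout
    set v : E := (InnerProductSpace.toDual ℝ E).symm F with hv
    have hvz : ∀ z : E, ⟪v, z⟫ = F z := fun z => InnerProductSpace.toDual_symm_apply
    have hvi : ∀ i, ⟪v, a i⟫ < u := fun i => by
      rw [hvz]; exact hFu _ (subset_convexHull ℝ _ (Set.mem_range_self i))
    have huc : u < ε * ⟪v, c⟫ := by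
      have := huF
      rw [← hvz, real_inner_smul_right] at this
      exact this
    have hvne : v ≠ 0 := by
      intro h0
      have h1 := hvi ⟨0, hN⟩
      have h2 := huc
      rw [h0] at h1 h2
      simp at h1 h2
      linarith
    have hvnorm : 0 < ‖v‖ := norm_pos_iff.mpr hvne
    have hvc : ⟪v, c⟫ ≤ ‖v‖ := by
      calc ⟪v, c⟫ ≤ ‖v‖ * ‖c‖ := real_inner_le_norm v c
        _ = ‖v‖ := by rw [hc, mul_one]
    set w : E := ‖v‖⁻¹ • v with hw
    have hws : w ∈ Metric.sphere (0:E) 1 := by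
      rw [mem_sphere_zero_iff_norm, hw, norm_smul, norm_inv, norm_norm,
        inv_mul_cancel₀ (ne_of_gt hvnorm)]
    have hfw : f w < ε := by
      rw [hf]
      rw [Finset.sup'_lt_iff]
      intro i _
      have : ⟪a i, w⟫ = ‖v‖⁻¹ * ⟪v, a i⟫ := by
        rw [hw, real_inner_smul_right, real_inner_comm]
      rw [this]
      have h1 : ⟪v, a i⟫ < u := hvi i
      have h2 : u < ε * ‖v‖ := lt_of_lt_of_le huc
        (mul_le_mul_of_nonneg_left hvc (le_of_lt hεpos))
      calc ‖v‖⁻¹ * ⟪v, a i⟫ < ‖v‖⁻¹ * (ε * ‖v‖) := by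
            apply mul_lt_mul_of_pos_left (lt_trans h1 h2) (inv_pos.mpr hvnorm)
        _ = ε := by field_simp
    exact absurd (hx₀min hws) (not_le.mpr hfw)
  rw [(Set.finite_range a).convexHull_eq] at hmem
  obtain ⟨w, hw0, hw1, hwc⟩ := hmem
  have htf : (Set.finite_range a).toFinset = Finset.univ.image a := by
    ext y; simp
  have hsum_eq : ∀ g : E → ℝ, ∑ y ∈ (Set.finite_range a).toFinset, g y = ∑ j, g (a j) := by
    intro g
    rw [htf, Finset.sum_image (fun x _ y _ h => ha_inj h)]
  have hw1' : ∑ j, w (a j) = 1 := by rw [← hsum_eq]; exact hw1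
  have hcm : ∑ y ∈ (Set.finite_range a).toFinset, w y • y = ε • c := by
    rw [Finset.centerMass_eq_of_sum_1 _ id hw1] at hwc
    simpa using hwc
  have hcm' : ∑ j, w (a j) • a j = ε • c := by
    rw [← hcm, htf, Finset.sum_image (fun x _ y _ h => ha_inj h)]
  refine ⟨fun j => ε⁻¹ * w (a j), ⟨fun j => mul_nonneg (inv_nonneg.mpr (le_of_lt hεpos))
    (hw0 _ (Set.mem_range_self j)), ?_⟩, ?_⟩
  · have : ∑ j, (ε⁻¹ * w (a j)) • a j = ε⁻¹ • ∑ j, w (a j) • a j := by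
      rw [Finset.smul_sum]
      congr 1; ext j; rw [smul_smul]
    rw [this, hcm', smul_smul, inv_mul_cancel₀ (ne_of_gt hεpos), one_smul]
  · rw [← Finset.mul_sum, hw1', mul_one]

end Aux

theorem stmt_18 (d N : ℕ) (hd : 1 ≤ d) (hN : 1 ≤ N)
    (a : Fin N → EuclideanSpace ℝ (Fin d))
    (ha_inj : Function.Injective a) (ha_norm : ∀ i, ‖a i‖ = 1)
    (hQ0 : Qset a 0 = {0})
    (C : Set (EuclideanSpace ℝ (Fin d)))
    (hCne : C.Nonempty) (hCconv : Convex ℝ C) (hCcomp : IsCompact C) :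
    C ⊆ PGA a C ∧ semiDist (PGA a C) C ≤ kappaA a * setNorm C := by
  have hsub : C ⊆ PGA a C := fun x hx i => le_suppFn hCcomp hx (a i)
  refine ⟨hsub, ?_⟩
  obtain ⟨ε, hεpos, hrep⟩ := exists_rep hd hN a ha_inj hQ0
  -- notation for the inf-sets
  set S : EuclideanSpace ℝ (Fin d) → Set ℝ :=
    fun c => {s | ∃ p ∈ Qstar a c, s = ∑ k, p k * ‖a k - (∑ j, p j)⁻¹ • c‖} with hS
  have hS_nonneg : ∀ c, ∀ s ∈ S c, 0 ≤ s := by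
    rintro c _ ⟨p, ⟨hp0, _⟩, rfl⟩
    exact Finset.sum_nonneg fun k _ => mul_nonneg (hp0 k) (norm_nonneg _)
  have hS_bdd : ∀ c, BddBelow (S c) := fun c => ⟨0, fun s hs => hS_nonneg c s hs⟩
  -- each inf is bounded by ε⁻¹ * (1 + ε)
  have hS_ne : ∀ c : EuclideanSpace ℝ (Fin d), ‖c‖ = 1 →
      ∃ s ∈ S c, s ≤ ε⁻¹ * (1 + ε) := by
    intro c hc
    obtain ⟨p, hp, hpsum⟩ := hrep c hc
    refine ⟨_, ⟨p, hp, rfl⟩, ?_⟩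
    have hinv : (∑ j, p j)⁻¹ = ε := by rw [hpsum, inv_inv]
    have : ∀ k, p k * ‖a k - (∑ j, p j)⁻¹ • c‖ ≤ p k * (1 + ε) := by
      intro k
      apply mul_le_mul_of_nonneg_left _ (hp.1 k)
      calc ‖a k - (∑ j, p j)⁻¹ • c‖ ≤ ‖a k‖ + ‖(∑ j, p j)⁻¹ • c‖ := norm_sub_le _ _
        _ = 1 + ε := by rw [ha_norm k, hinv, norm_smul, hc, mul_one,
              Real.norm_eq_abs, abs_of_pos hεpos]
    calc ∑ k, p k * ‖a k - (∑ j, p j)⁻¹ • c‖ ≤ ∑ k, p k * (1 + ε) :=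
          Finset.sum_le_sum fun k _ => this k
      _ = ε⁻¹ * (1 + ε) := by rw [← Finset.sum_mul, hpsum]
  have hK_bdd : BddAbove {r | ∃ c : EuclideanSpace ℝ (Fin d), ‖c‖ = 1 ∧ r = sInf (S c)} := by
    refine ⟨ε⁻¹ * (1 + ε), ?_⟩
    rintro r ⟨c, hc, rfl⟩
    obtain ⟨s, hsmem, hsle⟩ := hS_ne c hc
    exact le_trans (csInf_le (hS_bdd c) hsmem) hsle
  have hkappa : kappaA a = sSup {r | ∃ c : EuclideanSpace ℝ (Fin d), ‖c‖ = 1 ∧ r = sInf (S c)} := rfl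
  -- kappa nonneg
  have hsne : (Metric.sphere (0:EuclideanSpace ℝ (Fin d)) 1).Nonempty := by
    refine ⟨EuclideanSpace.single ⟨0, hd⟩ (1:ℝ), ?_⟩
    simp [EuclideanSpace.norm_single]
  obtain ⟨c₀, hc₀⟩ := hsne
  have hc₀' : ‖c₀‖ = 1 := mem_sphere_zero_iff_norm.mp hc₀
  have hkappa_nonneg : 0 ≤ kappaA a := by
    have h1 : sInf (S c₀) ∈ {r | ∃ c : EuclideanSpace ℝ (Fin d), ‖c‖ = 1 ∧ r = sInf (S c)} :=
      ⟨c₀, hc₀', rfl⟩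
    have h2 : 0 ≤ sInf (S c₀) := by
      obtain ⟨s, hsmem, _⟩ := hS_ne c₀ hc₀'
      exact le_csInf ⟨s, hsmem⟩ (fun b hb => hS_nonneg c₀ b hb)
    exact le_trans h2 (le_csSup hK_bdd h1)
  have hsetNorm_nonneg : 0 ≤ setNorm C := by
    obtain ⟨z, hz⟩ := hCne
    exact le_trans (norm_nonneg z) (le_setNorm hCcomp hz)
  apply Real.sSup_le _ (mul_nonneg hkappa_nonneg hsetNorm_nonneg)
  rintro _ ⟨x, hxP, rfl⟩
  -- main estimate
  rcases le_or_gt (Metric.infDist x C) 0 with hD | hD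
  · exact le_trans hD (mul_nonneg hkappa_nonneg hsetNorm_nonneg)
  obtain ⟨y, hyC, hxy⟩ := hCcomp.exists_infDist_eq_dist hCne x
  have hDpos : 0 < ‖x - y‖ := by rw [← dist_eq_norm, ← hxy]; exact hD
  set c : EuclideanSpace ℝ (Fin d) := ‖x - y‖⁻¹ • (x - y) with hcdef
  have hc : ‖c‖ = 1 := by
    rw [hcdef, norm_smul, norm_inv, norm_norm, inv_mul_cancel₀ (ne_of_gt hDpos)]
  -- obtuse angle property
  have hobtuse : ∀ z ∈ C, ⟪x - y, z - y⟫ ≤ 0 := by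
    have hiInf : ‖x - y‖ = ⨅ w : C, ‖x - w‖ := by
      rw [← dist_eq_norm, ← hxy, Metric.infDist_eq_iInf]
      simp only [dist_eq_norm]
    exact (norm_eq_iInf_iff_real_inner_le_zero hCconv hyC).mp hiInf
  have hsupc : suppFn C c ≤ ⟪c, y⟫ := by
    apply suppFn_le hCne
    intro z hz
    have h1 : ⟪c, z - y⟫ ≤ 0 := by
      rw [hcdef, real_inner_smul_left]
      exact mul_nonpos_of_nonneg_of_nonpos (inv_nonneg.mpr (norm_nonneg _)) (hobtuse z hz)
    have h2 : ⟪c, z⟫ - ⟪c, y⟫ ≤ 0 := by rwa [← inner_sub_right]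
    linarith
  have hDinner : ⟪c, x⟫ - ⟪c, y⟫ = ‖x - y‖ := by
    have : ⟪c, x - y⟫ = ‖x - y‖ := by
      rw [hcdef, real_inner_smul_left, real_inner_self_eq_norm_sq, sq,
        ← mul_assoc, inv_mul_cancel₀ (ne_of_gt hDpos), one_mul]
    rw [← this, inner_sub_right]
  -- D ≤ s * setNorm C for every s ∈ S c
  have hmain : ∀ s ∈ S c, ‖x - y‖ ≤ s * setNorm C := by
    rintro _ ⟨p, ⟨hp0, hpc⟩, rfl⟩
    set T : ℝ := ∑ j, p j with hT
    have hT1 : 1 ≤ T := by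
      have : ‖c‖ ≤ ∑ j, p j := by
        rw [← hpc]
        calc ‖∑ i, p i • a i‖ ≤ ∑ i, ‖p i • a i‖ := norm_sum_le _ _
          _ = ∑ i, p i := by
              congr 1; ext i
              rw [norm_smul, ha_norm i, mul_one, Real.norm_eq_abs, abs_of_nonneg (hp0 i)]
      rw [hc] at this; exact this
    have hT0 : 0 < T := lt_of_lt_of_le one_pos hT1
    -- per-k bound
    have hperk : ∀ k, suppFn C (a k) ≤ suppFn C (T⁻¹ • c) + ‖a k - T⁻¹ • c‖ * setNorm C := by
      intro k
      apply suppFn_le hCne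
      intro z hz
      have h1 : ⟪a k, z⟫ = ⟪T⁻¹ • c, z⟫ + ⟪a k - T⁻¹ • c, z⟫ := by
        rw [inner_sub_left]; ring
      rw [h1]
      have h2 : ⟪T⁻¹ • c, z⟫ ≤ suppFn C (T⁻¹ • c) := le_suppFn hCcomp hz _
      have h3 : ⟪a k - T⁻¹ • c, z⟫ ≤ ‖a k - T⁻¹ • c‖ * setNorm C := by
        calc ⟪a k - T⁻¹ • c, z⟫ ≤ ‖a k - T⁻¹ • c‖ * ‖z‖ := real_inner_le_norm _ _
          _ ≤ ‖a k - T⁻¹ • c‖ * setNorm C :=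
              mul_le_mul_of_nonneg_left (le_setNorm hCcomp hz) (norm_nonneg _)
      linarith
    have hhomog : suppFn C (T⁻¹ • c) ≤ T⁻¹ * suppFn C c := by
      apply suppFn_le hCne
      intro z hz
      rw [real_inner_smul_left]
      exact mul_le_mul_of_nonneg_left (le_suppFn hCcomp hz c) (inv_nonneg.mpr (le_of_lt hT0))
    -- inner c x ≤ sum p_k suppFn (a k)
    have hcx : ⟪c, x⟫ ≤ ∑ k, p k * suppFn C (a k) := by
      have h1 : ⟪c, x⟫ = ∑ k, p k * ⟪a k, x⟫ := by
        rw [← hpc, sum_inner]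
        congr 1; ext k; rw [real_inner_smul_left]
      rw [h1]
      exact Finset.sum_le_sum fun k _ => mul_le_mul_of_nonneg_left (hxP k) (hp0 k)
    have hsum2 : ∑ k, p k * suppFn C (a k) ≤
        T * suppFn C (T⁻¹ • c) + (∑ k, p k * ‖a k - T⁻¹ • c‖) * setNorm C := by
      calc ∑ k, p k * suppFn C (a k)
          ≤ ∑ k, p k * (suppFn C (T⁻¹ • c) + ‖a k - T⁻¹ • c‖ * setNorm C) :=
            Finset.sum_le_sum fun k _ => mul_le_mul_of_nonneg_left (hperk k) (hp0 k)
        _ = T * suppFn C (T⁻¹ • c) + (∑ k, p k * ‖a k - T⁻¹ • c‖) * setNorm C := by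
            simp only [mul_add, ← mul_assoc]
            rw [Finset.sum_add_distrib, ← Finset.sum_mul, ← Finset.sum_mul]
    have hfin : T * suppFn C (T⁻¹ • c) ≤ suppFn C c := by
      calc T * suppFn C (T⁻¹ • c) ≤ T * (T⁻¹ * suppFn C c) :=
            mul_le_mul_of_nonneg_left hhomog (le_of_lt hT0)
        _ = suppFn C c := by field_simp
    have := hDinner
    have hcy := hsupc
    linarith
  -- conclude
  have hScne : (S c).Nonempty := by
    obtain ⟨s, hsmem, _⟩ := hS_ne c hc
    exact ⟨s, hsmem⟩
  have hMpos : 0 < setNorm C := by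
    rcases lt_or_eq_of_le hsetNorm_nonneg with h | h
    · exact h
    · exfalso
      obtain ⟨s, hsmem⟩ := hScne
      have := hmain s hsmem
      rw [← h, mul_zero] at this
      linarith
  have hDle : ‖x - y‖ ≤ sInf (S c) * setNorm C := by
    have h1 : ‖x - y‖ / setNorm C ≤ sInf (S c) := by
      apply le_csInf hScne
      intro s hs
      rw [div_le_iff₀ hMpos]
      exact hmain s hs
    calc ‖x - y‖ = ‖x - y‖ / setNorm C * setNorm C := by field_simp
      _ ≤ sInf (S c) * setNorm C := mul_le_mul_of_nonneg_right h1 (le_of_lt hMpos)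
  have hkle : sInf (S c) ≤ kappaA a := by
    rw [hkappa]
    exact le_csSup hK_bdd ⟨c, hc, rfl⟩
  calc Metric.infDist x C = ‖x - y‖ := by rw [hxy, dist_eq_norm]
    _ ≤ sInf (S c) * setNorm C := hDle
    _ ≤ kappaA a * setNorm C := mul_le_mul_of_nonneg_right hkle (le_of_lt hMpos)
end
end
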